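/- Let m, n, p be positive integers, δ ≥ 0, L, U ∈ ℝ^p, w ∈ ℝ^m, and let q ∈ [0,1]^{m×p} satisfy ∑_{ℓ=1}^p q_{iℓ} = 1 for every i. Consider the polytope P := {x ∈ ℝ^m : 0 ≤ x_i ≤ 1 for all i, ∑_{i=1}^m x_i = n, and for all ℓ, L_ℓ − δn ≤ ∑_{i=1}^m q_{iℓ} x_i ≤ U_ℓ + δn}. If P is nonempty, then there exists x ∈ P such that ∑_{i=1}^m w_i x_i ≥ ∑_{i=1}^m w_i y_i for every y ∈ P, and x has at most min(m, p) fractional coordinates (#{i : 0 < x_i < 1} ≤ min(m, p)). -/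

import Mathlib

lemma ker_ne_zero_aux {α : Type*} [Fintype α] {p : ℕ}
    (A : (α → ℝ) →ₗ[ℝ] (Fin p → ℝ)) (h : p < Fintype.card α) :
    ∃ f, A f = 0 ∧ f ≠ 0 := by
  by_contra hc
  push_neg at hc
  have hker : LinearMap.ker A = ⊥ := by
    rw [Submodule.eq_bot_iff]
    intro f hf
    exact hc f hf
  have h1 := LinearMap.finrank_range_add_finrank_ker A
  rw [hker, finrank_bot] at h1
  have h2 : Module.finrank ℝ (LinearMap.range A) ≤ p := by
    have h4 := Submodule.finrank_le (LinearMap.range A)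
    simpa using h4
  have h3 : Module.finrank ℝ (α → ℝ) = Fintype.card α := by simp
  omega


/-- **Existence of a basic feasible optimal solution (one protected attribute).** If the
denoised LP polytope is nonempty, there is a maximizer of the linear objective `wᵀx`
over it with at most `min m p` fractional coordinates. -/
theorem stmt7 (m n p : ℕ) (hm : 0 < m) (hn : 0 < n) (hp : 0 < p)
    (δ : ℝ) (hδ : 0 ≤ δ) (L U : Fin p → ℝ) (w : Fin m → ℝ)
    (q : Fin m → Fin p → ℝ) (hq : ∀ i ℓ, q i ℓ ∈ Set.Icc (0 : ℝ) 1)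
    (hqsum : ∀ i, ∑ ℓ, q i ℓ = 1)
    (P : Set (Fin m → ℝ))
    (hP : P = {x | (∀ i, 0 ≤ x i ∧ x i ≤ 1) ∧ (∑ i, x i = (n : ℝ)) ∧
      ∀ ℓ, L ℓ - δ * n ≤ ∑ i, q i ℓ * x i ∧ ∑ i, q i ℓ * x i ≤ U ℓ + δ * n})
    (hPne : P.Nonempty) :
    ∃ x ∈ P, (∀ y ∈ P, ∑ i, w i * y i ≤ ∑ i, w i * x i) ∧
      {i | 0 < x i ∧ x i < 1}.ncard ≤ min m p := by
  classical
  -- Compactness of P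
  have hclosed : IsClosed P := by
    rw [hP]
    have heq : {x : Fin m → ℝ | (∀ i, 0 ≤ x i ∧ x i ≤ 1) ∧ (∑ i, x i = (n : ℝ)) ∧
        ∀ ℓ, L ℓ - δ * n ≤ ∑ i, q i ℓ * x i ∧ ∑ i, q i ℓ * x i ≤ U ℓ + δ * n} =
        (⋂ i, ({x : Fin m → ℝ | 0 ≤ x i} ∩ {x | x i ≤ 1})) ∩
        ({x : Fin m → ℝ | ∑ i, x i = (n : ℝ)} ∩
        ⋂ ℓ, ({x : Fin m → ℝ | L ℓ - δ * n ≤ ∑ i, q i ℓ * x i} ∩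
          {x | ∑ i, q i ℓ * x i ≤ U ℓ + δ * n})) := by
      ext x
      simp [Set.mem_iInter, forall_and]
    rw [heq]
    have hc1 : ∀ ℓ : Fin p, Continuous fun x : Fin m → ℝ => ∑ i, q i ℓ * x i := by
      intro ℓ
      exact continuous_finset_sum _ fun i _ => (continuous_const.mul (continuous_apply i))
    refine (isClosed_iInter fun i => ((isClosed_le continuous_const (continuous_apply i)).inter
      (isClosed_le (continuous_apply i) continuous_const))).inter
      ((isClosed_eq (continuous_finset_sum _ fun i _ => continuous_apply i) continuous_const).inter
      (isClosed_iInter fun ℓ => (isClosed_le continuous_const (hc1 ℓ)).inter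
        (isClosed_le (hc1 ℓ) continuous_const)))
  have hsub : P ⊆ Set.pi Set.univ (fun _ : Fin m => Set.Icc (0:ℝ) 1) := by
    intro x hx
    rw [hP] at hx
    intro i _
    exact ⟨(hx.1 i).1, (hx.1 i).2⟩
  have hcpt : IsCompact P :=
    (isCompact_univ_pi fun _ => isCompact_Icc).of_isClosed_subset hclosed hsub
  have hcont : ContinuousOn (fun x : Fin m → ℝ => ∑ i, w i * x i) P :=
    (continuous_finset_sum _ fun i _ => (continuous_const.mul (continuous_apply i))).continuousOn
  obtain ⟨x₀, hx₀P, hx₀max⟩ := hcpt.exists_isMaxOn hPne hcont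
  -- The set of fractional counts over maximizers
  set Cset : Set ℕ := {k | ∃ x, x ∈ P ∧ (∀ y ∈ P, ∑ i, w i * y i ≤ ∑ i, w i * x i) ∧
    (Finset.univ.filter fun i => 0 < x i ∧ x i < 1).card = k} with hCset
  have hCne : Cset.Nonempty :=
    ⟨_, x₀, hx₀P, fun y hy => hx₀max hy, rfl⟩
  obtain ⟨x, hxP, hxmax, hxcard⟩ := Nat.sInf_mem hCne
  set S : Finset (Fin m) := Finset.univ.filter (fun i => 0 < x i ∧ x i < 1) with hS
  refine ⟨x, hxP, hxmax, ?_⟩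
  have hncard : {i | 0 < x i ∧ x i < 1}.ncard = S.card := by
    rw [← Set.ncard_coe_finset]
    congr 1
    ext i
    simp [hS]
  rw [hncard]
  have hxP' := hxP
  rw [hP] at hxP'
  obtain ⟨hxbox, hxsum, hxq⟩ := hxP'
  refine le_min (le_trans (Finset.card_le_univ S) (by simp)) ?_
  by_contra hgt
  push_neg at hgt
  -- p < S.card: derive contradiction
  have hScard : Fintype.card ↥S = S.card := Fintype.card_coe S
  set A : (↥S → ℝ) →ₗ[ℝ] (Fin p → ℝ) :=
    { toFun := fun f ℓ => ∑ i : ↥S, q i.1 ℓ * f i,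
      map_add' := by
        intro f g
        funext ℓ
        simp [mul_add, Finset.sum_add_distrib]
      map_smul' := by
        intro c f
        funext ℓ
        simp [Finset.mul_sum, mul_left_comm] } with hA
  obtain ⟨f, hAf, hf0⟩ := ker_ne_zero_aux A (by rw [hScard]; exact hgt)
  -- key step: no direction d works
  have key : ∀ d : Fin m → ℝ, (∀ i, i ∉ S → d i = 0) →
      (∀ ℓ, ∑ i, q i ℓ * d i = 0) → (∃ j, d j ≠ 0) →
      (0 ≤ ∑ i, w i * d i) → False := by
    intro d hsupp hkerq ⟨j, hj⟩ hwd
    have hdsum : ∑ i, d i = 0 := by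
      have h1 : ∀ i : Fin m, d i = ∑ ℓ, q i ℓ * d i := by
        intro i
        rw [← Finset.sum_mul, hqsum i, one_mul]
      calc ∑ i, d i = ∑ i, ∑ ℓ, q i ℓ * d i := Finset.sum_congr rfl fun i _ => h1 i
        _ = ∑ ℓ, ∑ i, q i ℓ * d i := Finset.sum_comm
        _ = 0 := by simp [hkerq]
    set S' : Finset (Fin m) := S.filter (fun i => d i ≠ 0) with hS'
    have hS'ne : S'.Nonempty := by
      refine ⟨j, ?_⟩
      simp only [hS', Finset.mem_filter]
      refine ⟨?_, hj⟩
      by_contra hjS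
      exact hj (hsupp j hjS)
    set r : Fin m → ℝ := fun i => if 0 < d i then (1 - x i) / d i else x i / (-d i) with hr
    set ε : ℝ := S'.inf' hS'ne r with hε
    have hmemS' : ∀ i ∈ S', (0 < x i ∧ x i < 1) ∧ d i ≠ 0 := by
      intro i hi
      rw [hS', Finset.mem_filter] at hi
      have h1 := hi.1
      rw [hS, Finset.mem_filter] at h1
      exact ⟨h1.2, hi.2⟩
    have hrpos : ∀ i ∈ S', 0 < r i := by
      intro i hi
      obtain ⟨⟨hx0, hx1⟩, hd⟩ := hmemS' i hi
      simp only [hr]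
      by_cases hdi : 0 < d i
      · rw [if_pos hdi]
        exact div_pos (by linarith) hdi
      · rw [if_neg hdi]
        have : d i < 0 := lt_of_le_of_ne (not_lt.mp hdi) hd
        exact div_pos hx0 (by linarith)
    have hεpos : 0 < ε := by
      rw [hε, Finset.lt_inf'_iff]
      exact hrpos
    obtain ⟨istar, histar, histareq⟩ := Finset.exists_mem_eq_inf' hS'ne r
    set x' : Fin m → ℝ := fun i => x i + ε * d i with hx'
    have hzero : ∀ i, i ∉ S' → d i = 0 := by
      intro i hi
      by_contra hd
      have hiS : i ∈ S := by
        by_contra hiS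
        exact hd (hsupp i hiS)
      exact hi (Finset.mem_filter.mpr ⟨hiS, hd⟩)
    have hbox : ∀ i, 0 ≤ x' i ∧ x' i ≤ 1 := by
      intro i
      by_cases hi : i ∈ S'
      · obtain ⟨⟨hx0, hx1⟩, hd⟩ := hmemS' i hi
        have hle : ε ≤ r i := Finset.inf'_le r hi
        by_cases hdi : 0 < d i
        · constructor
          · have : 0 ≤ ε * d i := le_of_lt (mul_pos hεpos hdi)
            simp only [hx']
            linarith
          · have h2 : ε * d i ≤ r i * d i := mul_le_mul_of_nonneg_right hle (le_of_lt hdi)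
            have h3 : r i * d i = 1 - x i := by
              simp only [hr]; simp only [if_pos hdi]
              field_simp
            simp only [hx']
            linarith
        · have hdneg : d i < 0 := lt_of_le_of_ne (not_lt.mp hdi) hd
          constructor
          · have h2 : r i * d i ≤ ε * d i := mul_le_mul_of_nonpos_right hle (le_of_lt hdneg)
            have h3 : r i * d i = -(x i) := by
              simp only [hr]; simp only [if_neg hdi]
              field_simp
            simp only [hx']
            linarith
          · have : ε * d i ≤ 0 := le_of_lt (mul_neg_of_pos_of_neg hεpos hdneg)
            simp only [hx']
            linarith
      · have hd := hzero i hi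
        simp only [hx', hd, mul_zero, add_zero]
        exact hxbox i
    have hqeq : ∀ ℓ, ∑ i, q i ℓ * x' i = ∑ i, q i ℓ * x i := by
      intro ℓ
      have : ∀ i : Fin m, q i ℓ * x' i = q i ℓ * x i + ε * (q i ℓ * d i) := by
        intro i; simp only [hx']; ring
      rw [Finset.sum_congr rfl fun i _ => this i, Finset.sum_add_distrib, ← Finset.mul_sum,
        hkerq ℓ, mul_zero, add_zero]
    have hx'sum : ∑ i, x' i = (n : ℝ) := by
      simp only [hx']
      rw [Finset.sum_add_distrib, ← Finset.mul_sum, hdsum, mul_zero, add_zero, hxsum]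
    have hx'P : x' ∈ P := by
      rw [hP]
      refine ⟨hbox, hx'sum, fun ℓ => ?_⟩
      rw [hqeq ℓ]
      exact hxq ℓ
    have hx'obj : ∑ i, w i * x i ≤ ∑ i, w i * x' i := by
      have : ∀ i : Fin m, w i * x' i = w i * x i + ε * (w i * d i) := by
        intro i; simp only [hx']; ring
      rw [Finset.sum_congr rfl fun i _ => this i, Finset.sum_add_distrib, ← Finset.mul_sum]
      nlinarith
    have hx'max : ∀ y ∈ P, ∑ i, w i * y i ≤ ∑ i, w i * x' i :=
      fun y hy => le_trans (hxmax y hy) hx'obj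
    -- x' has strictly fewer fractional coordinates
    have histarS : istar ∈ S := (Finset.mem_filter.mp histar).1
    have hstar : x' istar = 0 ∨ x' istar = 1 := by
      obtain ⟨⟨hx0, hx1⟩, hd⟩ := hmemS' istar histar
      by_cases hdi : 0 < d istar
      · right
        have h3 : r istar * d istar = 1 - x istar := by
          simp only [hr]; simp only [if_pos hdi]; field_simp
        simp only [hx', hε, histareq]
        linarith
      · left
        have h3 : r istar * d istar = -(x istar) := by
          simp only [hr]; simp only [if_neg hdi]; field_simp
        simp only [hx', hε, histareq]
        linarith
    have hsubS : (Finset.univ.filter fun i => 0 < x' i ∧ x' i < 1) ⊆ S.erase istar := by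
      intro i hi
      simp only [Finset.mem_filter, Finset.mem_univ, true_and] at hi
      rw [Finset.mem_erase]
      constructor
      · rintro rfl
        rcases hstar with h | h
        · exact absurd h (ne_of_gt hi.1)
        · exact absurd h (ne_of_lt hi.2)
      · by_contra hiS
        have hd : d i = 0 := hsupp i hiS
        have : x' i = x i := by simp [hx', hd]
        rw [this] at hi
        exact hiS (Finset.mem_filter.mpr ⟨Finset.mem_univ i, hi⟩)
    have hcardlt : (Finset.univ.filter fun i => 0 < x' i ∧ x' i < 1).card < S.card := by
      calc (Finset.univ.filter fun i => 0 < x' i ∧ x' i < 1).card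
          ≤ (S.erase istar).card := Finset.card_le_card hsubS
        _ < S.card := Finset.card_erase_lt_of_mem histarS
    have hmem : (Finset.univ.filter fun i => 0 < x' i ∧ x' i < 1).card ∈ Cset :=
      ⟨x', hx'P, hx'max, rfl⟩
    have := Nat.sInf_le hmem
    omega
  -- build d from f
  set d : Fin m → ℝ := fun i => if h : i ∈ S then f ⟨i, h⟩ else 0 with hd
  have hsupp : ∀ i, i ∉ S → d i = 0 := by
    intro i hi
    simp [hd, hi]
  have hkerq : ∀ ℓ, ∑ i, q i ℓ * d i = 0 := by
    intro ℓ
    have h1 : ∑ i, q i ℓ * d i = ∑ i ∈ S, q i ℓ * d i := by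
      symm
      apply Finset.sum_subset (Finset.subset_univ S)
      intro i _ hi
      rw [hsupp i hi, mul_zero]
    have h2 : ∑ i ∈ S, q i ℓ * d i = ∑ i : ↥S, q i.1 ℓ * d i.1 := by
      rw [← Finset.sum_coe_sort]
    have h3 : ∀ i : ↥S, d i.1 = f i := by
      intro i
      simp [hd, i.2]
    have h4 : ∑ i : ↥S, q i.1 ℓ * d i.1 = ∑ i : ↥S, q i.1 ℓ * f i := by
      exact Finset.sum_congr rfl fun i _ => by rw [h3 i]
    have h5 : A f ℓ = 0 := by rw [hAf]; rfl
    rw [h1, h2, h4]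
    exact h5
  have hjex : ∃ j, d j ≠ 0 := by
    by_contra hc
    push_neg at hc
    apply hf0
    funext i
    have := hc i.1
    simp only [hd] at this
    rw [dif_pos i.2] at this
    simpa using this
  rcases le_or_gt 0 (∑ i, w i * d i) with hwd | hwd
  · exact key d hsupp hkerq hjex hwd
  · have hneg : ∑ i, w i * -(d i) = -∑ i, w i * d i := by
      rw [← Finset.sum_neg_distrib]
      exact Finset.sum_congr rfl fun i _ => by ring
    exact key (fun i => -(d i))
      (fun i hi => by show -(d i) = 0; rw [hsupp i hi, neg_zero])
      (fun ℓ => by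
        show ∑ i, q i ℓ * -(d i) = 0
        have : ∀ i : Fin m, q i ℓ * -(d i) = -(q i ℓ * d i) := fun i => by ring
        rw [Finset.sum_congr rfl fun i _ => this i]
        simp [Finset.sum_neg_distrib, hkerq ℓ])
      (by obtain ⟨j, hj⟩ := hjex; exact ⟨j, by simpa using hj⟩)
      (by show (0:ℝ) ≤ ∑ i, w i * -(d i); rw [hneg]; linarith)
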